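/- Let G = ℤ be endowed with the topology generated by the base {U_{n,m} : n, m ∈ ℤ} where U_{n,m} = {k ∈ ℤ : k = n or k ≥ m}. Then G is a paratopological group which is not Hausdorff, and {-1, 0} is a suitable set for G. -/

import Mathlib

private lemma tail_lemma (U : Set ℤ)
    (h : TopologicalSpace.GenerateOpen
      {U : Set ℤ | ∃ n m : ℤ, U = {k : ℤ | k = n ∨ m ≤ k}} U) :
    ∀ x ∈ U, ∃ m : ℤ, ∀ k, m ≤ k → k ∈ U := by
  induction h with
  | basic u hu =>
      obtain ⟨n, m, rfl⟩ := hu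
      exact fun x _ => ⟨m, fun k hk => Or.inr hk⟩
  | univ => exact fun x _ => ⟨0, fun k _ => trivial⟩
  | inter u v hu hv ihu ihv =>
      rintro x ⟨hxu, hxv⟩
      obtain ⟨m1, h1⟩ := ihu x hxu
      obtain ⟨m2, h2⟩ := ihv x hxv
      exact ⟨max m1 m2, fun k hk =>
        ⟨h1 k (le_trans (le_max_left _ _) hk), h2 k (le_trans (le_max_right _ _) hk)⟩⟩
  | sUnion s hs ih =>
      rintro x ⟨u, hu, hxu⟩
      obtain ⟨m, hm⟩ := ih u hu x hxu
      exact ⟨m, fun k hk => ⟨u, hu, hm k hk⟩⟩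

theorem stmt2 (τ : TopologicalSpace ℤ)
    (hτ : τ = TopologicalSpace.generateFrom
      {U : Set ℤ | ∃ n m : ℤ, U = {k : ℤ | k = n ∨ m ≤ k}}) :
    @ContinuousAdd ℤ τ _ ∧ ¬ @T2Space ℤ τ ∧
    -- `{-1, 0}` is a suitable set for `G`:
    @DiscreteTopology ({-1, 0} : Set ℤ) (@instTopologicalSpaceSubtype ℤ _ τ) ∧
    @IsClosed ℤ τ (({-1, 0} : Set ℤ) ∪ {0}) ∧
    @Dense ℤ τ (AddSubgroup.closure ({-1, 0} : Set ℤ) : Set ℤ) := by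
  subst hτ
  letI τ' : TopologicalSpace ℤ := TopologicalSpace.generateFrom
      {U : Set ℤ | ∃ n m : ℤ, U = {k : ℤ | k = n ∨ m ≤ k}}
  have hbasic : ∀ n m : ℤ, @IsOpen ℤ τ' {k : ℤ | k = n ∨ m ≤ k} := fun n m =>
    TopologicalSpace.GenerateOpen.basic _ ⟨n, m, rfl⟩
  refine ⟨?_, ?_, ?_, ?_, ?_⟩
  · -- ContinuousAdd
    constructor
    rw [continuous_generateFrom_iff]
    rintro u ⟨n, m, rfl⟩
    rw [isOpen_prod_iff]
    intro a b hab
    refine ⟨{k : ℤ | k = a ∨ max (m - b) 0 ≤ k}, {k : ℤ | k = b ∨ max (m - a) m ≤ k},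
      hbasic _ _, hbasic _ _, Or.inl rfl, Or.inl rfl, ?_⟩
    rintro ⟨x, y⟩ ⟨hx, hy⟩
    simp only [Set.mem_preimage, Set.mem_setOf_eq] at *
    rcases hx with hx | hx <;> rcases hy with hy | hy
    · subst hx; subst hy; exact hab
    · subst hx; right; have := le_trans (le_max_left _ _) hy; omega
    · subst hy; right; have := le_trans (le_max_left _ _) hx; omega
    · right
      have h1 := le_trans (le_max_right _ _) hx
      have h2 := le_trans (le_max_right _ _) hy
      omega
  · -- not T2
    intro h
    obtain ⟨u, v, hu, hv, h0, h1, huv⟩ := t2_separation (show (0 : ℤ) ≠ 1 by norm_num)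
    obtain ⟨m1, hm1⟩ := tail_lemma u hu 0 h0
    obtain ⟨m2, hm2⟩ := tail_lemma v hv 1 h1
    exact absurd huv (Set.not_disjoint_iff.2 ⟨max m1 m2,
      hm1 _ (le_max_left _ _), hm2 _ (le_max_right _ _)⟩)
  · -- discrete
    rw [discreteTopology_iff_isOpen_singleton]
    intro x
    have : ({x} : Set ({-1, 0} : Set ℤ)) =
        Subtype.val ⁻¹' {k : ℤ | k = (x : ℤ) ∨ 1 ≤ k} := by
      ext y
      simp only [Set.mem_singleton_iff, Set.mem_preimage, Set.mem_setOf_eq]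
      constructor
      · rintro rfl; exact Or.inl rfl
      · rintro (h | h)
        · exact Subtype.ext h
        · exfalso
          have hy := y.2
          simp only [Set.mem_insert_iff, Set.mem_singleton_iff] at hy
          omega
    rw [this]
    exact (hbasic _ _).preimage continuous_subtype_val
  · -- closed
    have : (({-1, 0} : Set ℤ) ∪ {0}) = ({-1, 0} : Set ℤ) := by
      simp [Set.union_eq_self_of_subset_right]
    rw [this, ← isOpen_compl_iff, isOpen_iff_forall_mem_open]
    intro x hx
    simp only [Set.mem_compl_iff, Set.mem_insert_iff, Set.mem_singleton_iff, not_or] at hx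
    refine ⟨{k : ℤ | k = x ∨ 1 ≤ k}, ?_, hbasic _ _, Or.inl rfl⟩
    rintro k (rfl | hk)
    · simp only [Set.mem_compl_iff, Set.mem_insert_iff, Set.mem_singleton_iff]; omega
    · simp only [Set.mem_compl_iff, Set.mem_insert_iff, Set.mem_singleton_iff]; omega
  · -- dense
    have : AddSubgroup.closure ({-1, 0} : Set ℤ) = ⊤ := by
      rw [eq_top_iff]
      intro n _
      have hm1 : (-1 : ℤ) ∈ AddSubgroup.closure ({-1, 0} : Set ℤ) :=
        AddSubgroup.subset_closure (by simp)
      have h1 : (1 : ℤ) ∈ AddSubgroup.closure ({-1, 0} : Set ℤ) := by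
        simpa using AddSubgroup.neg_mem _ hm1
      have := AddSubgroup.zsmul_mem _ h1 n
      simpa using this
    rw [this]
    simp [dense_univ]
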